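/- Let m and n be integers with 1 ≤ n ≤ m, let q ∈ (0,1), and set ℓ = m−n+1. Extend W_{m,q} by setting W_{m,q}(A) = 0 for every finite subset A ⊆ ℕ that is not contained in {0,1,...,m−1}. Then for every n-element subset B = {i_1 < i_2 < ... < i_n} of {0,1,...,m−1}: W_{m,q}(B) = W_{m,q}(B+1) + Σ_{k=1}^{n} W_{m,q}({0} ∪ ((B ∖ {i_k}) + 1)) · ((1−q)/(1−q^ℓ)) · q^{i_k − (k−1)}, where A+1 denotes {a+1 : a ∈ A}. (This is the stationarity/balance equation of the bounded geometric juggler's exclusion process, in which the particle thrown from height 0 lands at the (ξ+1)-th vacant height counted from below, with ξ distributed as an ℓ-truncated geometric distribution with parameter q; the theorem states that the weights W_{m,q} solve it.) -/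

import Mathlib

noncomputable section

/-- The `q`-analogue `[k]_q = (1 - q^k)/(1 - q)` of a natural number `k`. -/
def qAnalogue (q : ℝ) (k : ℕ) : ℝ := (1 - q ^ k) / (1 - q)

/-- `v_B(x) = |{x, x+1, ..., m-1} \ B|`, the number of vacant slots weakly above `x`. -/
def vB (m : ℕ) (B : Finset ℕ) (x : ℕ) : ℕ := ((Finset.Ico x m) \ B).card

/-- The stationary weight `W_{m,q}(B) = ∏_{x ∈ B} [1 + v_B(x)]_q * q^x`. -/
def W (m : ℕ) (q : ℝ) (B : Finset ℕ) : ℝ :=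
  ∏ x ∈ B, qAnalogue q (1 + vB m B x) * q ^ x

/-- The extension of `W_{m,q}` by zero to finite subsets of `ℕ` not contained
in `{0, ..., m-1}`. -/
def Wext (m : ℕ) (q : ℝ) (A : Finset ℕ) : ℝ :=
  if A ⊆ Finset.range m then W m q A else 0

/- ### Auxiliary definitions and lemmas -/

/-- The rank of `x` in `B`. -/
def sB (B : Finset ℕ) (x : ℕ) : ℕ := (B.filter (· < x)).card

/-- The "current" factor. -/
def gF (ℓ : ℕ) (q : ℝ) (B : Finset ℕ) (x : ℕ) : ℝ :=
  qAnalogue q (ℓ - (x - sB B x)) * q ^ x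

/-- The "shifted" factor. -/
def hF (ℓ : ℕ) (q : ℝ) (B : Finset ℕ) (x : ℕ) : ℝ :=
  qAnalogue q (ℓ - (x - sB B x + 1)) * q ^ (x + 1)

lemma qAnalogue_zero (q : ℝ) : qAnalogue q 0 = 0 := by simp [qAnalogue]

lemma qAnalogue_step (q : ℝ) (hq : q ≠ 1) (c : ℕ) :
    qAnalogue q (c + 1) - q * qAnalogue q c = 1 := by
  have h : (1:ℝ) - q ≠ 0 := fun h => hq (by linarith [sub_eq_zero.mp h])
  unfold qAnalogue
  rw [mul_div_assoc', div_sub_div_same, div_eq_one_iff_eq h]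
  ring

lemma sB_le (B : Finset ℕ) (x : ℕ) : sB B x ≤ x := by
  have : B.filter (· < x) ⊆ Finset.range x := by
    intro b hb
    simp only [Finset.mem_filter] at hb
    simpa using hb.2
  simpa [sB] using Finset.card_le_card this

/-- The basic counting facts about ranks inside `B ⊆ range m`. -/
lemma rank_facts (m : ℕ) (B : Finset ℕ) (hB : B ⊆ Finset.range m) {x : ℕ} (hx : x ∈ B) :
    x - sB B x ≤ m - B.card ∧ x < m ∧
      1 + vB m B x = (m - B.card + 1) - (x - sB B x) := by
  have hxm : x < m := by simpa using hB hx
  have h1 : vB m B x + (Finset.Ico x m ∩ B).card = m - x := by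
    rw [vB, Finset.card_sdiff_add_card_inter, Nat.card_Ico]
  have h2 : (Finset.Ico x m ∩ B).card + sB B x = B.card := by
    have he : Finset.Ico x m ∩ B = B.filter (fun b => ¬ b < x) := by
      ext b
      simp only [Finset.mem_inter, Finset.mem_Ico, Finset.mem_filter, not_lt]
      constructor
      · rintro ⟨⟨hxb, _⟩, hb⟩; exact ⟨hb, hxb⟩
      · rintro ⟨hb, hxb⟩; exact ⟨⟨hxb, by simpa using hB hb⟩, hb⟩
    rw [he, sB, add_comm]
    exact Finset.card_filter_add_card_filter_not _
  have h3 : sB B x ≤ x := sB_le B x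
  refine ⟨by omega, hxm, by omega⟩

lemma W_formula (m : ℕ) (q : ℝ) (B : Finset ℕ) (hB : B ⊆ Finset.range m) :
    W m q B = ∏ x ∈ B, qAnalogue q ((m - B.card + 1) - (x - sB B x)) * q ^ x := by
  unfold W
  refine Finset.prod_congr rfl fun x hx => ?_
  rw [(rank_facts m B hB hx).2.2]

/-- Splitting a product over `B.erase x` at `x ∈ B`. -/
lemma prod_erase_split (B : Finset ℕ) (x : ℕ) (F : ℕ → ℝ) :
    ∏ z ∈ B.erase x, F z =
      (∏ z ∈ B.filter (· < x), F z) * ∏ z ∈ B.filter (x < ·), F z := by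
  have hesplit : B.erase x = (B.filter (· < x)) ∪ (B.filter (x < ·)) := by
    ext b
    simp only [Finset.mem_erase, Finset.mem_union, Finset.mem_filter]
    constructor
    · rintro ⟨hne, hb⟩
      rcases hne.lt_or_gt with hlt | hlt
      · exact Or.inl ⟨hb, hlt⟩
      · exact Or.inr ⟨hb, hlt⟩
    · rintro (⟨hb, hlt⟩ | ⟨hb, hlt⟩) <;> exact ⟨by omega, hb⟩
  have hdisj : Disjoint (B.filter (· < x)) (B.filter (x < ·)) := by
    rw [Finset.disjoint_left]
    intro b hb1 hb2
    simp only [Finset.mem_filter] at hb1 hb2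
    omega
  rw [hesplit, Finset.prod_union hdisj]

/-- The telescoping identity for products. -/
lemma telescope (g h : ℕ → ℝ) (B : Finset ℕ) :
    ∏ x ∈ B, g x = (∏ x ∈ B, h x) +
      ∑ x ∈ B, (g x - h x) *
        ((∏ y ∈ B.filter (· < x), g y) * ∏ y ∈ B.filter (x < ·), h y) := by
  induction B using Finset.induction_on_min with
  | empty => simp
  | insert a s ha ih =>
    have hans : a ∉ s := fun h => lt_irrefl a (ha a h)
    rw [Finset.prod_insert hans, Finset.prod_insert hans, Finset.sum_insert hans]
    have hfa1 : (insert a s).filter (· < a) = ∅ := by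
      refine Finset.filter_eq_empty_iff.mpr fun b hb => ?_
      rcases Finset.mem_insert.mp hb with rfl | hb
      · exact lt_irrefl _
      · exact not_lt.mpr (le_of_lt (ha b hb))
    have hfa2 : (insert a s).filter (a < ·) = s := by
      ext b
      simp only [Finset.mem_filter, Finset.mem_insert]
      constructor
      · rintro ⟨rfl | hb, hab⟩
        · exact absurd hab (lt_irrefl _)
        · exact hb
      · intro hb; exact ⟨Or.inr hb, ha b hb⟩
    have hsum : ∑ x ∈ s, (g x - h x) *
        ((∏ y ∈ (insert a s).filter (· < x), g y) * ∏ y ∈ (insert a s).filter (x < ·), h y)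
        = g a * ∑ x ∈ s, (g x - h x) *
        ((∏ y ∈ s.filter (· < x), g y) * ∏ y ∈ s.filter (x < ·), h y) := by
      rw [Finset.mul_sum]
      refine Finset.sum_congr rfl fun x hx => ?_
      have h1 : (insert a s).filter (· < x) = insert a (s.filter (· < x)) := by
        rw [Finset.filter_insert, if_pos (ha x hx)]
      have h2 : (insert a s).filter (x < ·) = s.filter (x < ·) := by
        rw [Finset.filter_insert, if_neg (not_lt.mpr (le_of_lt (ha x hx)))]
      have h3 : a ∉ s.filter (· < x) := fun h => hans (Finset.mem_of_mem_filter a h)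
      rw [h1, h2, Finset.prod_insert h3]
      ring
    rw [hfa1, hfa2, hsum, ih]
    simp only [Finset.prod_empty]
    ring

theorem W_balance (m n : ℕ) (hn : 1 ≤ n) (hm : n ≤ m) (q : ℝ) (hq : q ∈ Set.Ioo (0 : ℝ) 1)
    (B : Finset ℕ) (hB : B ⊆ Finset.range m) (hBcard : B.card = n) :
    Wext m q B =
      Wext m q (B.image (· + 1)) +
        ∑ x ∈ B,
          Wext m q (insert 0 ((B.erase x).image (· + 1))) *
            ((1 - q) / (1 - q ^ (m - n + 1))) * q ^ (x - (B.filter (· < x)).card) := by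
  obtain ⟨hq0, hq1⟩ := hq
  have hqne1 : q ≠ 1 := ne_of_lt hq1
  have h1q : (1:ℝ) - q ≠ 0 := sub_ne_zero.mpr (ne_of_gt (by linarith))
  have hinj : Function.Injective (· + 1 : ℕ → ℕ) := add_left_injective 1
  set ℓ := m - n + 1 with hℓ
  -- h vanishes at the top site
  have h_top : ∀ z ∈ B, m ≤ z + 1 → hF ℓ q B z = 0 := by
    intro z hz hzm
    have hzlt : z < m := by simpa using hB hz
    have hzeq : z + 1 = m := by omega
    have hfe : B.filter (· < z) = B.erase z := by
      ext b
      simp only [Finset.mem_filter, Finset.mem_erase]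
      constructor
      · rintro ⟨hb, hbz⟩; exact ⟨by omega, hb⟩
      · rintro ⟨hbz, hb⟩
        have : b < m := by simpa using hB hb
        exact ⟨hb, by omega⟩
    have hsz : sB B z = n - 1 := by
      rw [sB, hfe, Finset.card_erase_of_mem hz, hBcard]
    have h0 : ℓ - (z - sB B z + 1) = 0 := by omega
    rw [hF, h0, qAnalogue_zero, zero_mul]
  -- step 1: LHS
  have hgL : Wext m q B = ∏ x ∈ B, gF ℓ q B x := by
    rw [Wext, if_pos hB, W_formula m q B hB, hBcard]
    rfl
  -- step 2: shifted set
  have hhL : Wext m q (B.image (· + 1)) = ∏ x ∈ B, hF ℓ q B x := by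
    by_cases hsub : B.image (· + 1) ⊆ Finset.range m
    · rw [Wext, if_pos hsub, W_formula _ _ _ hsub, Finset.card_image_of_injective _ hinj,
        hBcard, Finset.prod_image (fun a _ b _ hab => hinj hab)]
      refine Finset.prod_congr rfl fun x hx => ?_
      have hcf : ((B.image (· + 1)).filter (· < x + 1)) = (B.filter (· < x)).image (· + 1) := by
        ext y
        simp only [Finset.mem_filter, Finset.mem_image]
        constructor
        · rintro ⟨⟨z, hz, rfl⟩, hy⟩; exact ⟨z, ⟨hz, by omega⟩, rfl⟩
        · rintro ⟨z, ⟨hz, hzx⟩, rfl⟩; exact ⟨⟨z, hz, rfl⟩, by omega⟩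
      have hsx : sB B x ≤ x := sB_le B x
      have hcard : sB (B.image (· + 1)) (x + 1) = sB B x := by
        rw [sB, sB, hcf, Finset.card_image_of_injective _ hinj]
      have harg : ℓ - (x + 1 - sB (B.image (· + 1)) (x + 1)) = ℓ - (x - sB B x + 1) := by
        rw [hcard]; omega
      rw [hF, ← harg, sB]
    · rw [Wext, if_neg hsub]
      obtain ⟨y, hy, hyr⟩ := Finset.not_subset.mp hsub
      obtain ⟨z, hz, rfl⟩ := Finset.mem_image.mp hy
      have hzm : m ≤ z + 1 := by simpa using hyr
      exact (Finset.prod_eq_zero hz (h_top z hz hzm)).symm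
  -- step 3: each summand
  have hterm : ∀ x ∈ B,
      Wext m q (insert 0 ((B.erase x).image (· + 1))) *
        ((1 - q) / (1 - q ^ ℓ)) * q ^ (x - sB B x) =
      q ^ x * ((∏ y ∈ B.filter (· < x), gF ℓ q B y) * ∏ y ∈ B.filter (x < ·), hF ℓ q B y) := by
    intro x hx
    have hsx : sB B x ≤ x := sB_le B x
    by_cases hsub : insert 0 ((B.erase x).image (· + 1)) ⊆ Finset.range m
    · -- good case
      have h0S : (0:ℕ) ∉ (B.erase x).image (· + 1) := by
        simp only [Finset.mem_image]
        rintro ⟨z, _, hz⟩; omega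
      have hcard : (insert 0 ((B.erase x).image (· + 1))).card = n := by
        rw [Finset.card_insert_of_notMem h0S, Finset.card_image_of_injective _ hinj,
          Finset.card_erase_of_mem hx, hBcard]
        omega
      rw [Wext, if_pos hsub, W_formula _ _ _ hsub, hcard]
      rw [Finset.prod_insert h0S]
      -- the factor at 0
      have hf0 : sB (insert 0 ((B.erase x).image (· + 1))) 0 = 0 := by
        rw [sB]
        simp only [Finset.card_eq_zero]
        refine Finset.filter_eq_empty_iff.mpr fun b _ => by omega
      rw [hf0]
      simp only [Nat.sub_zero, Nat.zero_sub, pow_zero, mul_one]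
      rw [Finset.prod_image (fun a _ b _ hab => hinj hab)]
      -- identify the factors over B.erase x
      have hfac : ∀ z ∈ B.erase x,
          qAnalogue q (ℓ - (z + 1 - sB (insert 0 ((B.erase x).image (· + 1))) (z + 1)))
              * q ^ (z + 1)
          = gF ℓ q (B.erase x) z * q := by
        intro z hz
        have hse : sB (B.erase x) z ≤ z := sB_le _ z
        have hcf : (insert 0 ((B.erase x).image (· + 1))).filter (· < z + 1)
            = insert 0 (((B.erase x).filter (· < z)).image (· + 1)) := by
          ext y
          simp only [Finset.mem_filter, Finset.mem_insert, Finset.mem_image]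
          constructor
          · rintro ⟨rfl | ⟨w, hw, rfl⟩, hy⟩
            · exact Or.inl rfl
            · exact Or.inr ⟨w, ⟨hw, by omega⟩, rfl⟩
          · rintro (rfl | ⟨w, ⟨hw, hwz⟩, rfl⟩)
            · exact ⟨Or.inl rfl, by omega⟩
            · exact ⟨Or.inr ⟨w, hw, rfl⟩, by omega⟩
        have h0f : (0:ℕ) ∉ ((B.erase x).filter (· < z)).image (· + 1) := by
          simp only [Finset.mem_image]
          rintro ⟨w, _, hw⟩; omega
        have hcard : sB (insert 0 ((B.erase x).image (· + 1))) (z + 1)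
            = sB (B.erase x) z + 1 := by
          rw [sB, sB, hcf, Finset.card_insert_of_notMem h0f,
            Finset.card_image_of_injective _ hinj]
        have harg : ℓ - (z + 1 - sB (insert 0 ((B.erase x).image (· + 1))) (z + 1))
            = ℓ - (z - sB (B.erase x) z) := by
          rw [hcard]; omega
        rw [harg, gF, pow_succ]
        ring
      rw [Finset.prod_congr rfl hfac, prod_erase_split]
      -- factors below x
      have hbelow : ∀ z ∈ B.filter (· < x),
          gF ℓ q (B.erase x) z * q = gF ℓ q B z * q := by
        intro z hz
        simp only [Finset.mem_filter] at hz
        have hfe : (B.erase x).filter (· < z) = B.filter (· < z) := by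
          rw [Finset.filter_erase]
          exact Finset.erase_eq_of_notMem (by
            simp only [Finset.mem_filter]
            rintro ⟨_, hxz⟩; omega)
        rw [gF, gF, sB, sB, hfe]
      -- factors above x
      have habove : ∀ z ∈ B.filter (x < ·),
          gF ℓ q (B.erase x) z * q = hF ℓ q B z := by
        intro z hz
        simp only [Finset.mem_filter] at hz
        have hfe : (B.erase x).filter (· < z) = (B.filter (· < z)).erase x := by
          rw [Finset.filter_erase]
        have hxin : x ∈ B.filter (· < z) := Finset.mem_filter.mpr ⟨hx, hz.2⟩
        have hsz1 : 1 ≤ sB B z := by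
          rw [sB]
          exact Finset.card_pos.mpr ⟨x, hxin⟩
        have hszz : sB B z ≤ z := sB_le B z
        have hcard : sB (B.erase x) z = sB B z - 1 := by
          rw [sB, sB, hfe, Finset.card_erase_of_mem hxin]
        have harg : ℓ - (z - sB (B.erase x) z) = ℓ - (z - sB B z + 1) := by
          rw [hcard]; omega
        rw [gF, hF, harg, pow_succ]
        ring
      rw [Finset.prod_congr rfl hbelow, Finset.prod_congr rfl habove]
      have hdistrib : ∏ z ∈ B.filter (· < x), gF ℓ q B z * q
          = (∏ z ∈ B.filter (· < x), gF ℓ q B z) * q ^ (sB B x) := by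
        rw [Finset.prod_mul_distrib, Finset.prod_const, sB]
      rw [hdistrib]
      -- now pure algebra
      have hqA : qAnalogue q ℓ * ((1 - q) / (1 - q ^ ℓ)) = 1 := by
        have hℓ1 : ℓ ≠ 0 := by omega
        have hqℓ : q ^ ℓ < 1 := pow_lt_one₀ (le_of_lt hq0) hq1 hℓ1
        have h1qℓ : (1:ℝ) - q ^ ℓ ≠ 0 := sub_ne_zero.mpr (ne_of_lt hqℓ).symm
        rw [qAnalogue]
        field_simp
      have hpow : q ^ (sB B x) * q ^ (x - sB B x) = q ^ x := by
        rw [← pow_add]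
        congr 1
        omega
      calc qAnalogue q ℓ * ((∏ y ∈ B.filter (· < x), gF ℓ q B y) * q ^ sB B x *
              ∏ y ∈ B.filter (x < ·), hF ℓ q B y) * ((1 - q) / (1 - q ^ ℓ)) * q ^ (x - sB B x)
          = (qAnalogue q ℓ * ((1 - q) / (1 - q ^ ℓ))) * (q ^ sB B x * q ^ (x - sB B x)) *
              ((∏ y ∈ B.filter (· < x), gF ℓ q B y) * ∏ y ∈ B.filter (x < ·), hF ℓ q B y) := by
            ring
        _ = q ^ x * ((∏ y ∈ B.filter (· < x), gF ℓ q B y) *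
              ∏ y ∈ B.filter (x < ·), hF ℓ q B y) := by
            rw [hqA, hpow, one_mul]
    · -- bad case: the set is not inside range m
      rw [Wext, if_neg hsub, zero_mul, zero_mul]
      obtain ⟨y, hy, hyr⟩ := Finset.not_subset.mp hsub
      have hm1 : 1 ≤ m := le_trans hn hm
      rcases Finset.mem_insert.mp hy with rfl | hy'
      · exact absurd (Finset.mem_range.mpr (by omega)) hyr
      obtain ⟨z, hz, rfl⟩ := Finset.mem_image.mp hy'
      have hzm : m ≤ z + 1 := by simpa using hyr
      have hzB : z ∈ B := Finset.mem_of_mem_erase hz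
      have hzx : x < z := by
        have hxlt : x < m := by simpa using hB hx
        have hne : z ≠ x := Finset.ne_of_mem_erase hz
        omega
      have hzf : z ∈ B.filter (x < ·) := Finset.mem_filter.mpr ⟨hzB, hzx⟩
      rw [Finset.prod_eq_zero hzf (h_top z hzB hzm)]
      ring
  -- step 4: the difference gF - hF
  have hgh : ∀ x ∈ B, gF ℓ q B x - hF ℓ q B x = q ^ x := by
    intro x hx
    obtain ⟨hax, -, -⟩ := rank_facts m B hB hx
    rw [hBcard] at hax
    have hc : ℓ - (x - sB B x) = (ℓ - (x - sB B x + 1)) + 1 := by omega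
    rw [gF, hF, hc]
    linear_combination (q ^ x) * qAnalogue_step q hqne1 (ℓ - (x - sB B x + 1))
  -- assemble
  rw [hgL, hhL, telescope (gF ℓ q B) (hF ℓ q B) B]
  congr 1
  refine Finset.sum_congr rfl fun x hx => ?_
  rw [← sB, hterm x hx, hgh x hx]
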